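/- arXiv:math/0612508 — 2 statements merged into one kernel-verified Lean document; each statement's English description precedes it below -/
import Mathlib

section
/- For every positive integer n with n ≠ 6, every automorphism of the symmetric group S_n is inner, i.e. the conjugation homomorphism S_n → Aut(S_n) sending g to conjugation by g is surjective; if moreover n ≠ 2, this homomorphism is also injective, so Aut(S_n) ≅ S_n. -/
open Equiv Equiv.Perm

set_option maxHeartbeats 1000000

section AuxiliaryLemmas
variable {α : Type*} [DecidableEq α] [Fintype α]


lemma isSwap_cycleType {g : Perm α} (h : g.IsSwap) : g.cycleType = {2} := by
  obtain ⟨a, b, hab, rfl⟩ := h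
  rw [(isCycle_swap hab).cycleType, support_swap hab]
  simp [hab]

lemma aux_three {x y z : α} (hxy : x ≠ y) (hxz : x ≠ z) :
    (swap x y * swap x z) ^ 6 = 1 := by
  by_cases h : y = z
  · subst h; rw [swap_mul_self, one_pow]
  · have h3 := (isThreeCycle_swap_mul_swap_same hxy hxz h).orderOf
    have h1 : (swap x y * swap x z) ^ 3 = 1 := by rw [← h3]; exact pow_orderOf_eq_one _
    calc (swap x y * swap x z) ^ 6 = ((swap x y * swap x z) ^ 3) ^ 2 := by rw [← pow_mul]
    _ = 1 := by rw [h1, one_pow]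

lemma swap_mul_swap_pow_six {a b c d : α} (hab : a ≠ b) (hcd : c ≠ d) :
    (swap a b * swap c d) ^ 6 = 1 := by
  by_cases hac : a = c
  · subst hac; exact aux_three hab hcd
  by_cases had : a = d
  · subst had; rw [swap_comm c a]; exact aux_three hab hac
  by_cases hbc : b = c
  · subst hbc; rw [swap_comm a b]; exact aux_three (Ne.symm hab) hcd
  by_cases hbd : b = d
  · subst hbd; rw [swap_comm a b, swap_comm c b]
    exact aux_three (Ne.symm hab) hbc
  · have hcom : Commute (swap a b) (swap c d) := by
      apply Equiv.Perm.Disjoint.commute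
      intro x
      by_cases hx : x = a ∨ x = b
      · right
        rcases hx with rfl | rfl
        · exact swap_apply_of_ne_of_ne hac had
        · exact swap_apply_of_ne_of_ne hbc hbd
      · left
        push_neg at hx
        exact swap_apply_of_ne_of_ne hx.1 hx.2
    rw [hcom.mul_pow]
    have h1 : (swap a b) ^ 6 = 1 := by
      rw [show (6:ℕ) = 2*3 from rfl, pow_mul, sq, swap_mul_self, one_pow]
    have h2 : (swap c d) ^ 6 = 1 := by
      rw [show (6:ℕ) = 2*3 from rfl, pow_mul, sq, swap_mul_self, one_pow]
    rw [h1, h2, one_mul]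

lemma conj_isSwap (φ : MulAut (Perm α)) {t g : Perm α} (ht : t.IsSwap)
    (hg : g.cycleType = (φ t).cycleType) : (φ.symm g).IsSwap := by
  have h1 : IsConj (φ t) g := isConj_iff_cycleType_eq.2 hg.symm
  have h2 : IsConj t (φ.symm g) := by
    have h3 := φ.symm.toMonoidHom.map_isConj h1
    simpa using h3
  have h4 : (φ.symm g).cycleType = {2} := by
    rw [← isConj_iff_cycleType_eq.1 h2, isSwap_cycleType ht]
  rw [← card_support_eq_two, ← sum_cycleType, h4]
  rfl

lemma prod_pow_six_eq_one (φ : MulAut (Perm α)) {t A B : Perm α} (ht : t.IsSwap)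
    (hA : A.cycleType = (φ t).cycleType) (hB : B.cycleType = (φ t).cycleType) :
    (A * B) ^ 6 = 1 := by
  obtain ⟨x₁, y₁, h₁, ht₁⟩ := conj_isSwap φ ht hA
  obtain ⟨x₂, y₂, h₂, ht₂⟩ := conj_isSwap φ ht hB
  have key : (φ.symm A * φ.symm B) ^ 6 = 1 := by
    rw [ht₁, ht₂]; exact swap_mul_swap_pow_six h₁ h₂
  have := congrArg φ key
  simpa using this


def gprod (f : ℕ → α) : ℕ → Perm α
  | 0 => 1
  | m+1 => swap (f (2*m)) (f (2*m+1)) * gprod f m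

lemma disj_swap_swap {a b c d : α} (hca : c ≠ a) (hcb : c ≠ b) (hda : d ≠ a) (hdb : d ≠ b) :
    Equiv.Perm.Disjoint (swap a b) (swap c d) := by
  intro x
  by_cases hxc : x = c
  · subst hxc; exact Or.inl (swap_apply_of_ne_of_ne hca hcb)
  by_cases hxd : x = d
  · subst hxd; exact Or.inl (swap_apply_of_ne_of_ne hda hdb)
  · exact Or.inr (swap_apply_of_ne_of_ne hxc hxd)

lemma disj_swap_gprod (f : ℕ → α) (m : ℕ) (a b : α)
    (h : ∀ x, x < 2*m → f x ≠ a ∧ f x ≠ b) :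
    Equiv.Perm.Disjoint (swap a b) (gprod f m) := by
  induction m with
  | zero => exact disjoint_one_right _
  | succ m ih =>
    have h1 := h (2*m) (by omega)
    have h2 := h (2*m+1) (by omega)
    exact Equiv.Perm.Disjoint.mul_right
      (disj_swap_swap h1.1 h1.2 h2.1 h2.2)
      (ih fun x hx => h x (by omega))

lemma gprod_cycleType (f : ℕ → α) (m : ℕ)
    (hf : ∀ x y, x < 2*m → y < 2*m → f x = f y → x = y) :
    (gprod f m).cycleType = Multiset.replicate m 2 := by
  induction m with
  | zero => simp [gprod, cycleType_one]
  | succ m ih =>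
    have hne : f (2*m) ≠ f (2*m+1) := fun hc => by
      have := hf _ _ (by omega) (by omega) hc; omega
    have hd : Equiv.Perm.Disjoint (swap (f (2*m)) (f (2*m+1))) (gprod f m) :=
      disj_swap_gprod f m _ _ (fun x hx =>
        ⟨fun hc => by have := hf _ _ (by omega) (by omega) hc; omega,
         fun hc => by have := hf _ _ (by omega) (by omega) hc; omega⟩)
    show (swap (f (2*m)) (f (2*m+1)) * gprod f m).cycleType = _
    rw [hd.cycleType_mul, isSwap_cycleType ⟨_, _, hne, rfl⟩,
      ih (fun x y hx hy => hf x y (by omega) (by omega)),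
      Multiset.replicate_succ, ← Multiset.singleton_add]

lemma gprod_sq (f : ℕ → α) (m : ℕ)
    (hf : ∀ x y, x < 2*m → y < 2*m → f x = f y → x = y) :
    gprod f m * gprod f m = 1 := by
  induction m with
  | zero => simp [gprod]
  | succ m ih =>
    have hd : Equiv.Perm.Disjoint (swap (f (2*m)) (f (2*m+1))) (gprod f m) :=
      disj_swap_gprod f m _ _ (fun x hx =>
        ⟨fun hc => by have := hf _ _ (by omega) (by omega) hc; omega,
         fun hc => by have := hf _ _ (by omega) (by omega) hc; omega⟩)
    show (swap (f (2*m)) (f (2*m+1)) * gprod f m) * (swap (f (2*m)) (f (2*m+1)) * gprod f m) = 1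
    rw [(hd.commute.symm).mul_mul_mul_comm, swap_mul_self,
      ih (fun x y hx hy => hf x y (by omega) (by omega)), one_mul]

set_option maxRecDepth 100000 in
lemma klein4 : ∀ a b : Perm (Fin 4), a*a = 1 → b*b=1 →
    (∀ x, a x ≠ x) → (∀ x, b x ≠ x) → (a*b)*(a*b) = 1 := by decide


lemma rhoA_pow_six {p0 p1 p2 p3 p4 : α}
    (h01 : p0 ≠ p1) (h02 : p0 ≠ p2) (h03 : p0 ≠ p3) (h04 : p0 ≠ p4)
    (h12 : p1 ≠ p2) (h13 : p1 ≠ p3) (h14 : p1 ≠ p4)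
    (h23 : p2 ≠ p3) (h24 : p2 ≠ p4) (h34 : p3 ≠ p4) :
    ((swap p0 p1 * (swap p2 p3 * (swap p1 p2 * swap p3 p4))) ^ 6) p0 = p1 := by
  set ρ := swap p0 p1 * (swap p2 p3 * (swap p1 p2 * swap p3 p4)) with hρ
  have e0 : ρ p0 = p1 := by
    simp [hρ, mul_apply, swap_apply_def, h01, h02, h03, h04, h12, h13, h14, h23, h24, h34, Ne.symm h01, Ne.symm h02, Ne.symm h03, Ne.symm h04, Ne.symm h12, Ne.symm h13, Ne.symm h14, Ne.symm h23, Ne.symm h24, Ne.symm h34]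
  have e1 : ρ p1 = p3 := by
    simp [hρ, mul_apply, swap_apply_def, h01, h02, h03, h04, h12, h13, h14, h23, h24, h34, Ne.symm h01, Ne.symm h02, Ne.symm h03, Ne.symm h04, Ne.symm h12, Ne.symm h13, Ne.symm h14, Ne.symm h23, Ne.symm h24, Ne.symm h34]
  have e3 : ρ p3 = p4 := by
    simp [hρ, mul_apply, swap_apply_def, h01, h02, h03, h04, h12, h13, h14, h23, h24, h34, Ne.symm h01, Ne.symm h02, Ne.symm h03, Ne.symm h04, Ne.symm h12, Ne.symm h13, Ne.symm h14, Ne.symm h23, Ne.symm h24, Ne.symm h34]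
  have e4 : ρ p4 = p2 := by
    simp [hρ, mul_apply, swap_apply_def, h01, h02, h03, h04, h12, h13, h14, h23, h24, h34, Ne.symm h01, Ne.symm h02, Ne.symm h03, Ne.symm h04, Ne.symm h12, Ne.symm h13, Ne.symm h14, Ne.symm h23, Ne.symm h24, Ne.symm h34]
  have e2 : ρ p2 = p0 := by
    simp [hρ, mul_apply, swap_apply_def, h01, h02, h03, h04, h12, h13, h14, h23, h24, h34, Ne.symm h01, Ne.symm h02, Ne.symm h03, Ne.symm h04, Ne.symm h12, Ne.symm h13, Ne.symm h14, Ne.symm h23, Ne.symm h24, Ne.symm h34]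
  have h6 : ρ ^ 6 = ρ*ρ*ρ*ρ*ρ*ρ := by
    rw [show (6:ℕ) = 1+1+1+1+1+1 from rfl, pow_add, pow_add, pow_add, pow_add, pow_add,
      pow_one]
  rw [h6]
  simp only [mul_apply, e0, e1, e3, e4, e2]


lemma rhoB_pow_six {p0 p1 p2 p3 p4 p5 p6 p7 : α}
    (h01 : p0 ≠ p1) (h02 : p0 ≠ p2) (h03 : p0 ≠ p3) (h04 : p0 ≠ p4) (h05 : p0 ≠ p5) (h06 : p0 ≠ p6) (h07 : p0 ≠ p7) (h12 : p1 ≠ p2) (h13 : p1 ≠ p3) (h14 : p1 ≠ p4) (h15 : p1 ≠ p5) (h16 : p1 ≠ p6) (h17 : p1 ≠ p7) (h23 : p2 ≠ p3) (h24 : p2 ≠ p4) (h25 : p2 ≠ p5) (h26 : p2 ≠ p6) (h27 : p2 ≠ p7) (h34 : p3 ≠ p4) (h35 : p3 ≠ p5) (h36 : p3 ≠ p6) (h37 : p3 ≠ p7) (h45 : p4 ≠ p5) (h46 : p4 ≠ p6) (h47 : p4 ≠ p7) (h56 : p5 ≠ p6) (h57 : p5 ≠ p7) (h67 : p6 ≠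 p7) :
    ((swap p0 p1 * (swap p2 p3 * (swap p4 p5 * (swap p6 p7 *
      (swap p1 p2 * (swap p3 p4 * (swap p5 p6 * swap p7 p0))))))) ^ 6) p0 = p4 := by
  set ρ := swap p0 p1 * (swap p2 p3 * (swap p4 p5 * (swap p6 p7 *
      (swap p1 p2 * (swap p3 p4 * (swap p5 p6 * swap p7 p0)))))) with hρ
  have e0 : ρ p0 = p6 := by simp [hρ, mul_apply, swap_apply_def, h01, h02, h03, h04, h05, h06, h07, h12, h13, h14, h15, h16, h17, h23, h24, h25, h26, h27, h34, h35, h36, h37, h45, h46, h47, h56, h57, h67, Ne.symm h01, Ne.symm h02, Ne.symm h03, Ne.symm h04, Ne.symm h05, Ne.symm h06, Ne.symm h07, Ne.symm h12, Ne.symm h13, Ne.symm h14, Ne.symm h15, Ne.symm h16, Ne.symm h17, Ne.symm h23, Ne.symm h24, Ne.symm h25, Ne.symm h26, Ne.symm h27, Ne.symm h34, Ne.symm h35, Ne.symm h36, Ne.symm h37, Ne.symm h45, Ne.symm h46, Ne.symm h47, Ne.symm h56, Ne.symm h57, Ne.symm h67]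
  have e6 : ρ p6 = p4 := by simp [hρ, mul_apply, swap_apply_def, h01, h02, h03, h04, h05, h06, h07, h12, h13, h14, h15, h16, h17, h23, h24, h25, h26, h27, h34, h35, h36, h37, h45, h46, h47, h56, h57, h67, Ne.symm h01, Ne.symm h02, Ne.symm h03, Ne.symm h04, Ne.symm h05, Ne.symm h06, Ne.symm h07, Ne.symm h12, Ne.symm h13, Ne.symm h14, Ne.symm h15, Ne.symm h16, Ne.symm h17, Ne.symm h23, Ne.symm h24, Ne.symm h25, Ne.symm h26, Ne.symm h27, Ne.symm h34, Ne.symm h35, Ne.symm h36, Ne.symm h37, Ne.symm h45, Ne.symm h46, Ne.symm h47, Ne.symm h56, Ne.symm h57, Ne.symm h67]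
  have e4 : ρ p4 = p2 := by simp [hρ, mul_apply, swap_apply_def, h01, h02, h03, h04, h05, h06, h07, h12, h13, h14, h15, h16, h17, h23, h24, h25, h26, h27, h34, h35, h36, h37, h45, h46, h47, h56, h57, h67, Ne.symm h01, Ne.symm h02, Ne.symm h03, Ne.symm h04, Ne.symm h05, Ne.symm h06, Ne.symm h07, Ne.symm h12, Ne.symm h13, Ne.symm h14, Ne.symm h15, Ne.symm h16, Ne.symm h17, Ne.symm h23, Ne.symm h24, Ne.symm h25, Ne.symm h26, Ne.symm h27, Ne.symm h34, Ne.symm h35, Ne.symm h36, Ne.symm h37, Ne.symm h45, Ne.symm h46, Ne.symm h47, Ne.symm h56, Ne.symm h57, Ne.symm h67]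
  have e2 : ρ p2 = p0 := by simp [hρ, mul_apply, swap_apply_def, h01, h02, h03, h04, h05, h06, h07, h12, h13, h14, h15, h16, h17, h23, h24, h25, h26, h27, h34, h35, h36, h37, h45, h46, h47, h56, h57, h67, Ne.symm h01, Ne.symm h02, Ne.symm h03, Ne.symm h04, Ne.symm h05, Ne.symm h06, Ne.symm h07, Ne.symm h12, Ne.symm h13, Ne.symm h14, Ne.symm h15, Ne.symm h16, Ne.symm h17, Ne.symm h23, Ne.symm h24, Ne.symm h25, Ne.symm h26, Ne.symm h27, Ne.symm h34, Ne.symm h35, Ne.symm h36, Ne.symm h37, Ne.symm h45, Ne.symm h46, Ne.symm h47, Ne.symm h56, Ne.symm h57, Ne.symm h67]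
  have h6 : ρ ^ 6 = ρ*ρ*ρ*ρ*ρ*ρ := by
    rw [show (6:ℕ) = 1+1+1+1+1+1 from rfl, pow_add, pow_add, pow_add, pow_add, pow_add,
      pow_one]
  rw [h6]
  simp only [mul_apply, e0, e6, e4, e2]

-- free-variable computation lemmas
lemma swap_triple_sq {x y u : α} (hxy : x ≠ y) (hxu : x ≠ u) (hyu : y ≠ u) :
    (swap x y * swap y u * swap x u) * (swap x y * swap y u * swap x u) = 1 := by
  ext p
  by_cases hpx : p = x
  · subst hpx
    simp [mul_apply, swap_apply_def, hxy, hxu, hyu, Ne.symm hxy, Ne.symm hxu, Ne.symm hyu]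
  by_cases hpy : p = y
  · subst hpy
    simp [mul_apply, swap_apply_def, hxy, hxu, hyu, Ne.symm hxy, Ne.symm hxu, Ne.symm hyu]
  by_cases hpu : p = u
  · subst hpu
    simp [mul_apply, swap_apply_def, hxy, hxu, hyu, Ne.symm hxy, Ne.symm hxu, Ne.symm hyu]
  · simp [mul_apply, swap_apply_def, hpx, hpy, hpu]

lemma four_cycle_sq {z a i j : α} (hza : z ≠ a) (hzi : z ≠ i) (hzj : z ≠ j)
    (hai : a ≠ i) (haj : a ≠ j) (hij : i ≠ j) :
    ((swap z a * swap z i * swap z j) * (swap z a * swap z i * swap z j)) z = i := by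
  simp [mul_apply, swap_apply_def, hza, hzi, hzj, hai, haj, hij,
    Ne.symm hza, Ne.symm hzi, Ne.symm hzj, Ne.symm hai, Ne.symm haj, Ne.symm hij]

lemma isSwap_eq_swap_of_mem_support {g : Perm α} (hg : g.IsSwap) {b : α}
    (hb : b ∈ g.support) : g = swap b (g b) := by
  obtain ⟨u, v, huv, rfl⟩ := hg
  rw [support_swap huv] at hb
  rcases Finset.mem_insert.1 hb with rfl | hb
  · rw [swap_apply_left]
  · rw [Finset.mem_singleton] at hb
    subst hb
    rw [swap_apply_right, swap_comm]

end AuxiliaryLemmas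

lemma swap_to_swap {n : ℕ} (h6 : n ≠ 6) (φ : MulAut (Equiv.Perm (Fin n)))
    {t : Equiv.Perm (Fin n)} (ht : t.IsSwap) : (φ t).IsSwap := by
  have horder : orderOf (φ t) = 2 := by
    rw [MulEquiv.orderOf_eq]
    obtain ⟨a, b, hab, rfl⟩ := ht
    refine orderOf_eq_prime ?_ (by rwa [Ne, swap_eq_one_iff])
    rw [sq]; exact swap_mul_self a b
  obtain ⟨k, hct⟩ := cycleType_prime_order (σ := φ t) (by rw [horder]; exact Nat.prime_two)
  rw [horder] at hct
  by_cases hk : k = 0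
  · subst hk
    rw [← card_support_eq_two, ← sum_cycleType, hct]
    rfl
  exfalso
  set m := k + 1 with hm
  have hm2 : 2 ≤ m := by omega
  have hsum : (φ t).support.card = 2 * m := by
    rw [← sum_cycleType, hct, Multiset.sum_replicate, smul_eq_mul]; omega
  have hmn : 2 * m ≤ n := by
    have h := Finset.card_le_univ (φ t).support
    rwa [hsum, Fintype.card_fin] at h
  have hn : 0 < n := by omega
  set f : ℕ → Fin n := fun x => ⟨x % n, Nat.mod_lt x hn⟩ with hf
  have finj : ∀ x y, x < n → y < n → f x = f y → x = y := by
    intro x y hx hy hxy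
    simpa [hf, Fin.ext_iff, Nat.mod_eq_of_lt hx, Nat.mod_eq_of_lt hy] using hxy
  have fne : ∀ x y, x < n → y < n → x ≠ y → f x ≠ f y :=
    fun x y hx hy hne hc => hne (finj x y hx hy hc)
  rcases lt_or_eq_of_le hmn with hlt | heq
  · -- Case A : 2m < n, produce a 5-cycle as a product of two class elements
    have h5 : 5 ≤ n := by omega
    set γ : Equiv.Perm (Fin n) := gprod (fun x => f (x + 5)) (m - 2) with hγ
    have γinj : ∀ x y, x < 2*(m-2) → y < 2*(m-2) → f (x+5) = f (y+5) → x = y := by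
      intro x y hx hy hxy
      have := finj (x+5) (y+5) (by omega) (by omega) hxy
      omega
    have hdis : ∀ a b : ℕ, a < 5 → b < 5 →
        Equiv.Perm.Disjoint (swap (f a) (f b)) γ := by
      intro a b ha hb
      exact disj_swap_gprod _ _ _ _ (fun x hx =>
        ⟨fne _ _ (by omega) (by omega) (by omega),
         fne _ _ (by omega) (by omega) (by omega)⟩)
    have ne_ : ∀ a b : ℕ, a < 5 → b < 5 → a ≠ b → f a ≠ f b :=
      fun a b ha hb => fne a b (by omega) (by omega)
    set α : Equiv.Perm (Fin n) := swap (f 0) (f 1) * (swap (f 2) (f 3) * γ) with hα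
    set β : Equiv.Perm (Fin n) := swap (f 1) (f 2) * (swap (f 3) (f 4) * γ) with hβ
    have hrep : ({2} : Multiset ℕ) + ({2} + Multiset.replicate (m-2) 2)
        = Multiset.replicate m 2 := by
      conv_rhs => rw [show m = m - 2 + 1 + 1 by omega]
      simp [Multiset.replicate_succ, Multiset.singleton_add]
    have hαct : α.cycleType = Multiset.replicate m 2 := by
      rw [hα, ((disj_swap_swap (ne_ 2 0 (by omega) (by omega) (by omega))
          (ne_ 2 1 (by omega) (by omega) (by omega)) (ne_ 3 0 (by omega) (by omega) (by omega))
          (ne_ 3 1 (by omega) (by omega) (by omega))).mul_right (hdis 0 1 (by omega) (by omega))).cycleType_mul,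
        (hdis 2 3 (by omega) (by omega)).cycleType_mul,
        isSwap_cycleType ⟨_, _, ne_ 0 1 (by omega) (by omega) (by omega), rfl⟩,
        isSwap_cycleType ⟨_, _, ne_ 2 3 (by omega) (by omega) (by omega), rfl⟩,
        gprod_cycleType _ _ γinj, hrep]
    have hβct : β.cycleType = Multiset.replicate m 2 := by
      rw [hβ, ((disj_swap_swap (ne_ 3 1 (by omega) (by omega) (by omega))
          (ne_ 3 2 (by omega) (by omega) (by omega)) (ne_ 4 1 (by omega) (by omega) (by omega))
          (ne_ 4 2 (by omega) (by omega) (by omega))).mul_right (hdis 1 2 (by omega) (by omega))).cycleType_mul,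
        (hdis 3 4 (by omega) (by omega)).cycleType_mul,
        isSwap_cycleType ⟨_, _, ne_ 1 2 (by omega) (by omega) (by omega), rfl⟩,
        isSwap_cycleType ⟨_, _, ne_ 3 4 (by omega) (by omega) (by omega), rfl⟩,
        gprod_cycleType _ _ γinj, hrep]
    have hc12 : Commute γ (swap (f 1) (f 2)) := ((hdis 1 2 (by omega) (by omega)).symm).commute
    have hc34 : Commute γ (swap (f 3) (f 4)) := ((hdis 3 4 (by omega) (by omega)).symm).commute
    have hγ2 : γ * γ = 1 := gprod_sq _ _ γinj
    have hαβ : α * β = swap (f 0) (f 1) * (swap (f 2) (f 3) * (swap (f 1) (f 2) * swap (f 3) (f 4))) := by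
      rw [hα, hβ]
      calc swap (f 0) (f 1) * (swap (f 2) (f 3) * γ) *
            (swap (f 1) (f 2) * (swap (f 3) (f 4) * γ))
          = swap (f 0) (f 1) * (swap (f 2) (f 3) *
            (γ * swap (f 1) (f 2) * (swap (f 3) (f 4) * γ))) := by
            simp only [mul_assoc]
        _ = swap (f 0) (f 1) * (swap (f 2) (f 3) *
            (swap (f 1) (f 2) * γ * (swap (f 3) (f 4) * γ))) := by
            rw [hc12.eq]
        _ = swap (f 0) (f 1) * (swap (f 2) (f 3) *
            (swap (f 1) (f 2) * (γ * swap (f 3) (f 4) * γ))) := by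
            simp only [mul_assoc]
        _ = swap (f 0) (f 1) * (swap (f 2) (f 3) *
            (swap (f 1) (f 2) * (swap (f 3) (f 4) * γ * γ))) := by
            rw [hc34.eq]
        _ = _ := by
            simp only [mul_assoc]
            rw [hγ2, mul_one]
    have hpow : (α * β) ^ 6 = 1 :=
      prod_pow_six_eq_one φ ht (hαct.trans hct.symm) (hβct.trans hct.symm)
    have hval := rhoA_pow_six (ne_ 0 1 (by omega) (by omega) (by omega))
      (ne_ 0 2 (by omega) (by omega) (by omega)) (ne_ 0 3 (by omega) (by omega) (by omega))
      (ne_ 0 4 (by omega) (by omega) (by omega)) (ne_ 1 2 (by omega) (by omega) (by omega))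
      (ne_ 1 3 (by omega) (by omega) (by omega)) (ne_ 1 4 (by omega) (by omega) (by omega))
      (ne_ 2 3 (by omega) (by omega) (by omega)) (ne_ 2 4 (by omega) (by omega) (by omega))
      (ne_ 3 4 (by omega) (by omega) (by omega))
    rw [← hαβ, hpow] at hval
    exact ne_ 0 1 (by omega) (by omega) (by omega) (by simpa using hval)
  · -- Case B : 2m = n
    by_cases hm3 : m = 3
    · exact h6 (by omega)
    by_cases hmk : m = 2
    · -- n = 4 : Klein four-group case
      have hn4 : n = 4 := by omega
      subst hn4
      obtain ⟨a, b, hab, htt⟩ := ht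
      obtain ⟨c, hca, hcb⟩ := (show ∀ a b : Fin 4, ∃ c, c ≠ a ∧ c ≠ b by decide) a b
      have hconj : IsConj t (swap a c) := by
        rw [isConj_iff_cycleType_eq, isSwap_cycleType ⟨a, b, hab, htt⟩,
          isSwap_cycleType ⟨a, c, Ne.symm hca, rfl⟩]
      have hBA : (φ (swap a c)).cycleType = (φ t).cycleType :=
        (isConj_iff_cycleType_eq.1 (φ.toMonoidHom.map_isConj hconj)).symm
      have hAA : φ t * φ t = 1 := by
        rw [← map_mul, htt, swap_mul_self, map_one]
      have hBB : φ (swap a c) * φ (swap a c) = 1 := by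
        rw [← map_mul, swap_mul_self, map_one]
      have hAcard : (φ t).support.card = 4 := by rw [hsum]; omega
      have hAuniv : (φ t).support = Finset.univ :=
        Finset.eq_univ_of_card _ (by rw [hAcard]; simp)
      have hAfpf : ∀ x, (φ t) x ≠ x := fun x =>
        mem_support.mp (hAuniv ▸ Finset.mem_univ x)
      have hBcard : (φ (swap a c)).support.card = 4 := by
        rw [← sum_cycleType, hBA, sum_cycleType, hAcard]
      have hBuniv : (φ (swap a c)).support = Finset.univ :=
        Finset.eq_univ_of_card _ (by rw [hBcard]; simp)
      have hBfpf : ∀ x, (φ (swap a c)) x ≠ x := fun x =>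
        mem_support.mp (hBuniv ▸ Finset.mem_univ x)
      have hk4 := klein4 _ _ hAA hBB hAfpf hBfpf
      have h1 : (t * swap a c) * (t * swap a c) = 1 := by
        apply φ.injective
        rw [map_one, map_mul, map_mul]
        exact hk4
      have h3 := (isThreeCycle_swap_mul_swap_same hab (Ne.symm hca) (Ne.symm hcb)).orderOf
      have hdvd : orderOf (swap a b * swap a c) ∣ 2 :=
        orderOf_dvd_of_pow_eq_one (by rw [sq, ← htt]; exact h1)
      rw [h3] at hdvd
      norm_num at hdvd
    · -- m ≥ 4 : produce a product of order 4
      have hm4 : 4 ≤ m := by omega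
      have h8 : 8 ≤ n := by omega
      set γ : Equiv.Perm (Fin n) := gprod (fun x => f (x + 8)) (m - 4) with hγ
      have γinj : ∀ x y, x < 2*(m-4) → y < 2*(m-4) → f (x+8) = f (y+8) → x = y := by
        intro x y hx hy hxy
        have := finj (x+8) (y+8) (by omega) (by omega) hxy
        omega
      have hdis : ∀ a b : ℕ, a < 8 → b < 8 →
          Equiv.Perm.Disjoint (swap (f a) (f b)) γ := by
        intro a b ha hb
        exact disj_swap_gprod _ _ _ _ (fun x hx =>
          ⟨fne _ _ (by omega) (by omega) (by omega),
           fne _ _ (by omega) (by omega) (by omega)⟩)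
      have ne8 : ∀ a b : ℕ, a < 8 → b < 8 → a ≠ b → f a ≠ f b :=
        fun a b ha hb => fne a b (by omega) (by omega)
      set α : Equiv.Perm (Fin n) :=
        swap (f 0) (f 1) * (swap (f 2) (f 3) * (swap (f 4) (f 5) * (swap (f 6) (f 7) * γ))) with hα
      set β : Equiv.Perm (Fin n) :=
        swap (f 1) (f 2) * (swap (f 3) (f 4) * (swap (f 5) (f 6) * (swap (f 7) (f 0) * γ))) with hβ
      have hrep : ({2} : Multiset ℕ) + ({2} + ({2} + ({2} + Multiset.replicate (m-4) 2)))
          = Multiset.replicate m 2 := by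
        conv_rhs => rw [show m = m - 4 + 1 + 1 + 1 + 1 by omega]
        simp [Multiset.replicate_succ, Multiset.singleton_add]
      have hαct : α.cycleType = Multiset.replicate m 2 := by
        have d67 : Equiv.Perm.Disjoint (swap (f 6) (f 7)) γ := hdis 6 7 (by omega) (by omega)
        have d45 : Equiv.Perm.Disjoint (swap (f 4) (f 5)) (swap (f 6) (f 7) * γ) :=
          (disj_swap_swap (ne8 6 4 (by omega) (by omega) (by omega)) (ne8 6 5 (by omega) (by omega) (by omega)) (ne8 7 4 (by omega) (by omega) (by omega)) (ne8 7 5 (by omega) (by omega) (by omega))).mul_right (hdis 4 5 (by omega) (by omega))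
        have d23 : Equiv.Perm.Disjoint (swap (f 2) (f 3)) (swap (f 4) (f 5) * (swap (f 6) (f 7) * γ)) :=
          (disj_swap_swap (ne8 4 2 (by omega) (by omega) (by omega)) (ne8 4 3 (by omega) (by omega) (by omega)) (ne8 5 2 (by omega) (by omega) (by omega)) (ne8 5 3 (by omega) (by omega) (by omega))).mul_right
            ((disj_swap_swap (ne8 6 2 (by omega) (by omega) (by omega)) (ne8 6 3 (by omega) (by omega) (by omega)) (ne8 7 2 (by omega) (by omega) (by omega)) (ne8 7 3 (by omega) (by omega) (by omega))).mul_right (hdis 2 3 (by omega) (by omega)))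
        have d01 : Equiv.Perm.Disjoint (swap (f 0) (f 1)) (swap (f 2) (f 3) * (swap (f 4) (f 5) * (swap (f 6) (f 7) * γ))) :=
          (disj_swap_swap (ne8 2 0 (by omega) (by omega) (by omega)) (ne8 2 1 (by omega) (by omega) (by omega)) (ne8 3 0 (by omega) (by omega) (by omega)) (ne8 3 1 (by omega) (by omega) (by omega))).mul_right
            ((disj_swap_swap (ne8 4 0 (by omega) (by omega) (by omega)) (ne8 4 1 (by omega) (by omega) (by omega)) (ne8 5 0 (by omega) (by omega) (by omega)) (ne8 5 1 (by omega) (by omega) (by omega))).mul_right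
              ((disj_swap_swap (ne8 6 0 (by omega) (by omega) (by omega)) (ne8 6 1 (by omega) (by omega) (by omega)) (ne8 7 0 (by omega) (by omega) (by omega)) (ne8 7 1 (by omega) (by omega) (by omega))).mul_right (hdis 0 1 (by omega) (by omega))))
        rw [hα, d01.cycleType_mul, d23.cycleType_mul, d45.cycleType_mul, d67.cycleType_mul,
          isSwap_cycleType ⟨_, _, (ne8 0 1 (by omega) (by omega) (by omega)), rfl⟩, isSwap_cycleType ⟨_, _, (ne8 2 3 (by omega) (by omega) (by omega)), rfl⟩,
          isSwap_cycleType ⟨_, _, (ne8 4 5 (by omega) (by omega) (by omega)), rfl⟩, isSwap_cycleType ⟨_, _, (ne8 6 7 (by omega) (by omega) (by omega)), rfl⟩,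
          gprod_cycleType _ _ γinj, hrep]
      have hβct : β.cycleType = Multiset.replicate m 2 := by
        have d70 : Equiv.Perm.Disjoint (swap (f 7) (f 0)) γ := hdis 7 0 (by omega) (by omega)
        have d56 : Equiv.Perm.Disjoint (swap (f 5) (f 6)) (swap (f 7) (f 0) * γ) :=
          (disj_swap_swap (ne8 7 5 (by omega) (by omega) (by omega)) (ne8 7 6 (by omega) (by omega) (by omega)) (ne8 0 5 (by omega) (by omega) (by omega)) (ne8 0 6 (by omega) (by omega) (by omega))).mul_right (hdis 5 6 (by omega) (by omega))
        have d34 : Equiv.Perm.Disjoint (swap (f 3) (f 4)) (swap (f 5) (f 6) * (swap (f 7) (f 0) * γ)) :=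
          (disj_swap_swap (ne8 5 3 (by omega) (by omega) (by omega)) (ne8 5 4 (by omega) (by omega) (by omega)) (ne8 6 3 (by omega) (by omega) (by omega)) (ne8 6 4 (by omega) (by omega) (by omega))).mul_right
            ((disj_swap_swap (ne8 7 3 (by omega) (by omega) (by omega)) (ne8 7 4 (by omega) (by omega) (by omega)) (ne8 0 3 (by omega) (by omega) (by omega)) (ne8 0 4 (by omega) (by omega) (by omega))).mul_right (hdis 3 4 (by omega) (by omega)))
        have d12 : Equiv.Perm.Disjoint (swap (f 1) (f 2)) (swap (f 3) (f 4) * (swap (f 5) (f 6) * (swap (f 7) (f 0) * γ))) :=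
          (disj_swap_swap (ne8 3 1 (by omega) (by omega) (by omega)) (ne8 3 2 (by omega) (by omega) (by omega)) (ne8 4 1 (by omega) (by omega) (by omega)) (ne8 4 2 (by omega) (by omega) (by omega))).mul_right
            ((disj_swap_swap (ne8 5 1 (by omega) (by omega) (by omega)) (ne8 5 2 (by omega) (by omega) (by omega)) (ne8 6 1 (by omega) (by omega) (by omega)) (ne8 6 2 (by omega) (by omega) (by omega))).mul_right
              ((disj_swap_swap (ne8 7 1 (by omega) (by omega) (by omega)) (ne8 7 2 (by omega) (by omega) (by omega)) (ne8 0 1 (by omega) (by omega) (by omega)) (ne8 0 2 (by omega) (by omega) (by omega))).mul_right (hdis 1 2 (by omega) (by omega))))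
        rw [hβ, d12.cycleType_mul, d34.cycleType_mul, d56.cycleType_mul, d70.cycleType_mul,
          isSwap_cycleType ⟨_, _, (ne8 1 2 (by omega) (by omega) (by omega)), rfl⟩, isSwap_cycleType ⟨_, _, (ne8 3 4 (by omega) (by omega) (by omega)), rfl⟩,
          isSwap_cycleType ⟨_, _, (ne8 5 6 (by omega) (by omega) (by omega)), rfl⟩, isSwap_cycleType ⟨_, _, (ne8 7 0 (by omega) (by omega) (by omega)), rfl⟩,
          gprod_cycleType _ _ γinj, hrep]
      have swapγ : ∀ (s X : Equiv.Perm (Fin n)), Commute γ s → γ * (s * X) = s * (γ * X) := by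
        intro s X hc
        rw [← mul_assoc, hc.eq, mul_assoc]
      have hγ2 : γ * γ = 1 := gprod_sq _ _ γinj
      have hαβ : α * β = swap (f 0) (f 1) * (swap (f 2) (f 3) * (swap (f 4) (f 5) * (swap (f 6) (f 7) *
          (swap (f 1) (f 2) * (swap (f 3) (f 4) * (swap (f 5) (f 6) * swap (f 7) (f 0))))))) := by
        rw [hα, hβ]
        simp only [mul_assoc]
        rw [swapγ _ _ ((hdis 1 2 (by omega) (by omega)).symm).commute,
          swapγ _ _ ((hdis 3 4 (by omega) (by omega)).symm).commute,
          swapγ _ _ ((hdis 5 6 (by omega) (by omega)).symm).commute,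
          swapγ _ _ ((hdis 7 0 (by omega) (by omega)).symm).commute,
          hγ2]
        simp only [mul_one]
      have hpow : (α * β) ^ 6 = 1 :=
        prod_pow_six_eq_one φ ht (hαct.trans hct.symm) (hβct.trans hct.symm)
      have hval := rhoB_pow_six (ne8 0 1 (by omega) (by omega) (by omega))
        (ne8 0 2 (by omega) (by omega) (by omega))
        (ne8 0 3 (by omega) (by omega) (by omega))
        (ne8 0 4 (by omega) (by omega) (by omega))
        (ne8 0 5 (by omega) (by omega) (by omega))
        (ne8 0 6 (by omega) (by omega) (by omega))
        (ne8 0 7 (by omega) (by omega) (by omega))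
        (ne8 1 2 (by omega) (by omega) (by omega))
        (ne8 1 3 (by omega) (by omega) (by omega))
        (ne8 1 4 (by omega) (by omega) (by omega))
        (ne8 1 5 (by omega) (by omega) (by omega))
        (ne8 1 6 (by omega) (by omega) (by omega))
        (ne8 1 7 (by omega) (by omega) (by omega))
        (ne8 2 3 (by omega) (by omega) (by omega))
        (ne8 2 4 (by omega) (by omega) (by omega))
        (ne8 2 5 (by omega) (by omega) (by omega))
        (ne8 2 6 (by omega) (by omega) (by omega))
        (ne8 2 7 (by omega) (by omega) (by omega))
        (ne8 3 4 (by omega) (by omega) (by omega))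
        (ne8 3 5 (by omega) (by omega) (by omega))
        (ne8 3 6 (by omega) (by omega) (by omega))
        (ne8 3 7 (by omega) (by omega) (by omega))
        (ne8 4 5 (by omega) (by omega) (by omega))
        (ne8 4 6 (by omega) (by omega) (by omega))
        (ne8 4 7 (by omega) (by omega) (by omega))
        (ne8 5 6 (by omega) (by omega) (by omega))
        (ne8 5 7 (by omega) (by omega) (by omega))
        (ne8 6 7 (by omega) (by omega) (by omega))
      rw [← hαβ, hpow] at hval
      exact ne8 0 4 (by omega) (by omega) (by omega) (by simpa using hval)

lemma exists_conj {n : ℕ} (h3 : 3 ≤ n) (h6 : n ≠ 6) (φ : MulAut (Equiv.Perm (Fin n))) :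
    ∃ g : Equiv.Perm (Fin n), MulAut.conj g = φ := by
  have hn : 0 < n := by omega
  set f : ℕ → Fin n := fun x => ⟨x % n, Nat.mod_lt x hn⟩ with hf
  have finj : ∀ x y, x < n → y < n → f x = f y → x = y := by
    intro x y hx hy hxy
    simpa [hf, Fin.ext_iff, Nat.mod_eq_of_lt hx, Nat.mod_eq_of_lt hy] using hxy
  set z : Fin n := f 0 with hz
  set o : Fin n := f 1 with ho
  have hzo : z ≠ o := fun h => by have := finj 0 1 (by omega) (by omega) h; omega
  -- all φ-images of the swaps (swap z i) are swaps
  have hsw : ∀ i : Fin n, i ≠ z → ((φ (swap z i)).IsSwap) := fun i hi =>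
    swap_to_swap h6 φ ⟨z, i, Ne.symm hi, rfl⟩
  have hsq : ∀ i : Fin n, i ≠ z → φ (swap z i) * φ (swap z i) = 1 := fun i hi => by
    rw [← map_mul, swap_mul_self, map_one]
  -- images of distinct swaps have intersecting supports
  have hmeet : ∀ i j : Fin n, i ≠ z → j ≠ z → i ≠ j →
      ∃ p, p ∈ (φ (swap z i)).support ∧ p ∈ (φ (swap z j)).support := by
    intro i j hi hj hij
    by_contra hcon
    push_neg at hcon
    have hdisj : Equiv.Perm.Disjoint (φ (swap z i)) (φ (swap z j)) := by
      rw [disjoint_iff_disjoint_support, Finset.disjoint_left]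
      intro p hp hq
      exact (hcon p hp) hq
    have h2 : (φ (swap z i) * φ (swap z j)) * (φ (swap z i) * φ (swap z j)) = 1 := by
      rw [hdisj.commute.symm.mul_mul_mul_comm, hsq i hi, hsq j hj, one_mul]
    have h3c := (isThreeCycle_swap_mul_swap_same (Ne.symm hi) (Ne.symm hj) hij).orderOf
    have : orderOf (swap z i * swap z j) ∣ 2 := by
      apply orderOf_dvd_of_pow_eq_one
      have := congrArg φ.symm (by rw [← map_mul] at h2; rw [← map_mul] at h2; exact h2 :
        φ ((swap z i * swap z j) * (swap z i * swap z j)) = 1)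
      simp only [MulEquiv.symm_apply_apply, map_one] at this
      rw [sq]
      exact this
    rw [h3c] at this
    norm_num at this
  -- a common point of all the supports
  obtain ⟨x, y, hxy, hx1⟩ := hsw o (Ne.symm hzo)
  have hxyo : x ∈ (φ (swap z o)).support ∧ y ∈ (φ (swap z o)).support := by
    rw [hx1, support_swap hxy]; simp
  have claim : (∀ i, i ≠ z → x ∈ (φ (swap z i)).support) ∨
      (∀ i, i ≠ z → y ∈ (φ (swap z i)).support) := by
    by_contra hcon
    push_neg at hcon
    obtain ⟨⟨i, hi, hxi⟩, ⟨j, hj, hyj⟩⟩ := hcon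
    have hio : i ≠ o := fun h => hxi (h ▸ hxyo.1)
    have hjo : j ≠ o := fun h => hyj (h ▸ hxyo.2)
    have hij : i ≠ j := by
      rintro rfl
      obtain ⟨p, hp1, hp2⟩ := hmeet o i (Ne.symm hzo) hi (Ne.symm hio)
      rw [hx1, support_swap hxy] at hp1
      rcases Finset.mem_insert.1 hp1 with rfl | hp1
      · exact hxi hp2
      · rw [Finset.mem_singleton] at hp1; subst hp1; exact hyj hp2
    have hyi : y ∈ (φ (swap z i)).support := by
      obtain ⟨p, hp1, hp2⟩ := hmeet o i (Ne.symm hzo) hi (Ne.symm hio)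
      rw [hx1, support_swap hxy] at hp1
      rcases Finset.mem_insert.1 hp1 with rfl | hp1
      · exact absurd hp2 hxi
      · rw [Finset.mem_singleton] at hp1; subst hp1; exact hp2
    have hxj : x ∈ (φ (swap z j)).support := by
      obtain ⟨p, hp1, hp2⟩ := hmeet o j (Ne.symm hzo) hj (Ne.symm hjo)
      rw [hx1, support_swap hxy] at hp1
      rcases Finset.mem_insert.1 hp1 with rfl | hp1
      · exact hp2
      · rw [Finset.mem_singleton] at hp1; subst hp1; exact absurd hp2 hyj
    set u : Fin n := (φ (swap z i)) y with hu
    set v : Fin n := (φ (swap z j)) x with hv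
    have hiu : φ (swap z i) = swap y u := isSwap_eq_swap_of_mem_support (hsw i hi) hyi
    have hjv : φ (swap z j) = swap x v := isSwap_eq_swap_of_mem_support (hsw j hj) hxj
    have huy : u ≠ y := mem_support.1 hyi
    have hux : u ≠ x := by
      intro h
      apply hxi
      rw [← h]
      exact apply_mem_support.2 hyi
    have hvx : v ≠ x := mem_support.1 hxj
    have hvy : v ≠ y := by
      intro h
      apply hyj
      rw [← h]
      exact apply_mem_support.2 hxj
    have huv : u = v := by
      obtain ⟨p, hp1, hp2⟩ := hmeet i j hi hj hij
      rw [hiu, support_swap (Ne.symm huy)] at hp1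
      rw [hjv, support_swap (Ne.symm hvx)] at hp2
      rcases Finset.mem_insert.1 hp1 with rfl | hp1
      · rcases Finset.mem_insert.1 hp2 with h | h
        · exact absurd h.symm hxy
        · rw [Finset.mem_singleton] at h; exact absurd h.symm hvy
      · rw [Finset.mem_singleton] at hp1; subst hp1
        rcases Finset.mem_insert.1 hp2 with h | h
        · exact absurd h hux
        · rwa [Finset.mem_singleton] at h
    have hQ : φ (swap z o * swap z i * swap z j) = swap x y * swap y u * swap x u := by
      rw [map_mul, map_mul, hx1, hiu, hjv, huv]
    have hQ2 : φ ((swap z o * swap z i * swap z j) * (swap z o * swap z i * swap z j)) = 1 := by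
      rw [map_mul, hQ]
      exact swap_triple_sq hxy (Ne.symm (huv ▸ hux)) (Ne.symm huy)
    have hR2 : (swap z o * swap z i * swap z j) * (swap z o * swap z i * swap z j) = 1 := by
      apply φ.injective
      rw [hQ2, map_one]
    have hfc := four_cycle_sq hzo (Ne.symm hi) (Ne.symm hj) (Ne.symm hio) (Ne.symm hjo) hij
    rw [hR2] at hfc
    exact hi ((show z = i from hfc)).symm
  obtain ⟨b, hb⟩ : ∃ b, ∀ i, i ≠ z → b ∈ (φ (swap z i)).support := by
    rcases claim with h | h
    · exact ⟨x, h⟩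
    · exact ⟨y, h⟩
  -- the conjugating permutation
  set gfun : Fin n → Fin n := fun i => if i = z then b else φ (swap z i) b with hgfun
  have hgval : ∀ i, i ≠ z → gfun i = φ (swap z i) b := fun i hi => by
    rw [hgfun]; simp [hi]
  have hgswap : ∀ i, i ≠ z → φ (swap z i) = swap b (gfun i) := fun i hi => by
    rw [hgval i hi]
    exact isSwap_eq_swap_of_mem_support (hsw i hi) (hb i hi)
  have hgne : ∀ i, i ≠ z → gfun i ≠ b := fun i hi => by
    rw [hgval i hi]
    exact mem_support.1 (hb i hi)
  have hgz : gfun z = b := by simp [hgfun]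
  have hginj : Function.Injective gfun := by
    intro i j h
    by_cases hiz : i = z
    · by_cases hjz : j = z
      · rw [hiz, hjz]
      · subst hiz
        rw [hgz] at h
        exact absurd h.symm (hgne j hjz)
    · by_cases hjz : j = z
      · subst hjz
        rw [hgz] at h
        exact absurd h (hgne i hiz)
      · have : φ (swap z i) = φ (swap z j) := by
          rw [hgswap i hiz, hgswap j hjz, h]
        have h2 : swap z i = swap z j := φ.injective this
        have := congrArg (fun e => e z) h2
        simpa [swap_apply_left] using this
  obtain ⟨σ, hσ⟩ : ∃ σ : Equiv.Perm (Fin n), ∀ i, σ i = gfun i :=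
    ⟨Equiv.ofBijective gfun (Finite.injective_iff_bijective.1 hginj),
      fun i => rfl⟩
  have key : ∀ i, i ≠ z → φ (swap z i) = σ * swap z i * σ⁻¹ := by
    intro i hi
    rw [← swap_apply_apply σ z i, hσ z, hσ i, hgz, hgswap i hi]
  -- the swaps (swap z i) generate everything
  set T : Set (Equiv.Perm (Fin n)) := {s | ∃ i, i ≠ z ∧ s = swap z i} with hT
  have hTtop : Subgroup.closure T = ⊤ := by
    rw [eq_top_iff, ← closure_isSwap]
    rw [Subgroup.closure_le]
    rintro s ⟨a, c, hac, rfl⟩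
    by_cases haz : a = z
    · subst haz
      exact Subgroup.subset_closure ⟨c, Ne.symm hac, rfl⟩
    by_cases hcz : c = z
    · subst hcz
      rw [swap_comm]
      exact Subgroup.subset_closure ⟨a, haz, rfl⟩
    · have hkey := swap_mul_swap_mul_swap (x := c) (y := z) (z := a) hcz (Ne.symm hac)
      have heq2 : swap a c = swap z a * swap c z * swap z a := hkey.symm
      rw [heq2]
      refine Subgroup.mul_mem _ (Subgroup.mul_mem _ ?_ ?_) ?_
      · exact Subgroup.subset_closure ⟨a, haz, rfl⟩
      · rw [swap_comm]
        exact Subgroup.subset_closure ⟨c, hcz, rfl⟩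
      · exact Subgroup.subset_closure ⟨a, haz, rfl⟩
  have hall : ∀ x : Equiv.Perm (Fin n), φ x = σ * x * σ⁻¹ := by
    intro x
    have hx : x ∈ Subgroup.closure T := by rw [hTtop]; exact Subgroup.mem_top x
    exact Subgroup.closure_induction (p := fun g _ => φ g = σ * g * σ⁻¹)
      (fun s hs => by obtain ⟨i, hi, rfl⟩ := hs; exact key i hi)
      (by simp)
      (fun u v hu hv h1 h2 => by show φ (u*v) = σ * (u*v) * σ⁻¹; rw [map_mul]; rw [(h1 : φ u = _), (h2 : φ v = _)]; group)
      (fun u hu h1 => by show φ u⁻¹ = σ * u⁻¹ * σ⁻¹; rw [map_inv]; rw [(h1 : φ u = _)]; group)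
      hx
  exact ⟨σ, MulEquiv.ext fun x => by rw [MulAut.conj_apply, hall x]⟩


/-- For every positive integer `n` with `n ≠ 6`, every automorphism of the symmetric
group `S_n` is inner, i.e. the conjugation homomorphism `S_n → Aut (S_n)` is surjective;
if moreover `n ≠ 2`, it is also injective, so `Aut (S_n) ≅ S_n`. -/
theorem aut_symmetricGroup_eq_inn (n : ℕ) (hn : 0 < n) (h6 : n ≠ 6) :
    Function.Surjective
      (MulAut.conj : Equiv.Perm (Fin n) →* MulAut (Equiv.Perm (Fin n))) ∧
    (n ≠ 2 →
      Function.Injective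
        (MulAut.conj : Equiv.Perm (Fin n) →* MulAut (Equiv.Perm (Fin n))) ∧
      Nonempty (MulAut (Equiv.Perm (Fin n)) ≃* Equiv.Perm (Fin n))) := by
  have hsurj : Function.Surjective
      (MulAut.conj : Equiv.Perm (Fin n) →* MulAut (Equiv.Perm (Fin n))) := by
    intro φ
    rcases Nat.lt_or_ge n 3 with hlt | hge
    · by_cases h1 : n = 1
      · subst h1
        haveI : Subsingleton (Equiv.Perm (Fin 1)) :=
          ⟨fun a b => Equiv.ext fun p => Subsingleton.elim _ _⟩
        exact ⟨1, MulEquiv.ext fun x => Subsingleton.elim _ _⟩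
      · have h2 : n = 2 := by omega
        subst h2
        refine ⟨1, MulEquiv.ext fun x => ?_⟩
        have hcases : ∀ y : Equiv.Perm (Fin 2), y = 1 ∨ y = swap 0 1 := by decide
        have hne1 : (swap (0 : Fin 2) 1) ≠ 1 := by decide
        have hx : (MulAut.conj (1 : Equiv.Perm (Fin 2))) x = x := by
          simp [MulAut.conj_apply]
        rw [hx]
        rcases hcases x with rfl | rfl
        · rw [map_one]
        · rcases hcases (φ (swap 0 1)) with h | h
          · exfalso
            apply hne1
            apply φ.injective
            rw [h, map_one]
          · exact h.symm
    · obtain ⟨g, hg⟩ := exists_conj hge h6 φ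
      exact ⟨g, hg⟩
  refine ⟨hsurj, fun hn2 => ?_⟩
  have hinj : Function.Injective
      (MulAut.conj : Equiv.Perm (Fin n) →* MulAut (Equiv.Perm (Fin n))) := by
    rcases (show n = 1 ∨ 3 ≤ n by omega) with h1 | h3
    · subst h1
      haveI : Subsingleton (Equiv.Perm (Fin 1)) :=
        ⟨fun a b => Equiv.ext fun p => Subsingleton.elim _ _⟩
      intro a b _
      exact Subsingleton.elim a b
    · intro a b hab
      set c : Equiv.Perm (Fin n) := b⁻¹ * a with hc
      have hcomm : ∀ x : Equiv.Perm (Fin n), c * x = x * c := by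
        intro x
        have hx : a * x * a⁻¹ = b * x * b⁻¹ := by
          have := congrArg (fun (e : MulAut (Equiv.Perm (Fin n))) => e x) hab
          simpa [MulAut.conj_apply] using this
        have h' : c * x * c⁻¹ = x := by
          rw [hc, mul_inv_rev, inv_inv]
          calc b⁻¹ * a * x * (a⁻¹ * b) = b⁻¹ * (a * x * a⁻¹) * b := by group
          _ = b⁻¹ * (b * x * b⁻¹) * b := by rw [hx]
          _ = x := by group
        calc c * x = (c * x * c⁻¹) * c := by group
        _ = x * c := by rw [h']
      have hc1 : c = 1 := by
        by_contra hne
        have hex : ∃ p, c p ≠ p := by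
          by_contra hall
          push_neg at hall
          exact hne (Equiv.ext hall)
        obtain ⟨p, hp⟩ := hex
        have hcompl : ({p, c p} : Finset (Fin n))ᶜ.Nonempty := by
          rw [← Finset.card_pos, Finset.card_compl]
          have := Finset.card_insert_le p ({c p} : Finset (Fin n))
          simp only [Finset.card_singleton] at this
          have hcard : Fintype.card (Fin n) = n := Fintype.card_fin n
          omega
        obtain ⟨q, hq⟩ := hcompl
        rw [Finset.mem_compl, Finset.mem_insert, Finset.mem_singleton] at hq
        push_neg at hq
        have hqq := congrArg (fun e : Equiv.Perm (Fin n) => e p) (hcomm (swap p q))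
        simp only [mul_apply, swap_apply_left] at hqq
        rw [swap_apply_of_ne_of_ne hp (fun h => hq.2 h.symm)] at hqq
        exact hq.1 (c.injective hqq)
      have : b⁻¹ * a = 1 := hc1
      have := inv_mul_eq_one.mp this
      exact this.symm
  exact ⟨hinj, ⟨(MulEquiv.ofBijective
    (MulAut.conj : Equiv.Perm (Fin n) →* MulAut (Equiv.Perm (Fin n)))
    ⟨hinj, hsurj⟩).symm⟩⟩
end

section
/- Let G = S_n with n ≥ 2, n ≠ 6, let C_0 = {1} be the conjugacy class of the identity, and let r be a ramification of G with r_{C_0} = k > 0 and r_C = 0 for all other conjugacy classes C. Then the number N(G, r) of isomorphism classes of ramification systems with characters of G with ramification r equals k + 1. -/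
/-- A ramification system with characters `RSC(G, r, χ⃗, u)` on a group `G`:
a ramification `r` assigning a nonnegative integer `r C` to each conjugacy class `C`
of `G`; a map `u` from conjugacy classes to `G` with `u C ∈ C`; and, for each
conjugacy class `C`, an `r C`-tuple of characters of the centralizer `Z_{u C}`
(one-dimensional representations, i.e. group homomorphisms `Z_{u C} → ℂˣ`).
For classes with `r C = 0` the tuple of characters is empty, so `χ` carries
information exactly for the classes in `K_r(G) = {C : r C ≠ 0}`. -/
structure RSC (G : Type*) [Group G] where
  /-- the ramification -/
  r : ConjClasses G → ℕ
  /-- a choice of representative of each conjugacy class -/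
  u : ConjClasses G → G
  hu : ∀ C : ConjClasses G, ConjClasses.mk (u C) = C
  /-- the tuple of characters of `Z_{u C}` attached to each conjugacy class `C` -/
  chi : ∀ C : ConjClasses G, Fin (r C) →
    (Subgroup.centralizer ({u C} : Set G) →* ℂˣ)

/-- Isomorphism of ramification systems with characters (over the same group `G`),
following the definition of the paper: `RSC(G, r, χ⃗, u) ≅ RSC(G, r', χ⃗', u')` if there
are a group automorphism `φ` of `G`, for each conjugacy class `C` an element `h_C ∈ G`
with `φ(h_C u(C) h_C⁻¹) = u'(φ(C))`, and for each `C ∈ K_r(G)` a bijection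
`φ_C : I_C(r) ≃ I_{φ(C)}(r')` such that
`χ'_{φ(C)}^{(φ_C(i))}(φ(h_C h h_C⁻¹)) = χ_C^{(i)}(h)` for all `h ∈ Z_{u(C)}` and
all `i`. -/
def RSC.Iso {G : Type*} [Group G] (A B : RSC G) : Prop :=
  ∃ φ : G ≃* G,
    ∀ C : ConjClasses G, ∃ h : G,
      φ (h * A.u C * h⁻¹) = B.u (ConjClasses.map (φ : G →* G) C) ∧
      (A.r C ≠ 0 →
        ∃ e : Fin (A.r C) ≃ Fin (B.r (ConjClasses.map (φ : G →* G) C)),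
          ∀ (i : Fin (A.r C)) (x : G)
            (hx : x ∈ Subgroup.centralizer ({A.u C} : Set G))
            (hx' : φ (h * x * h⁻¹) ∈
              Subgroup.centralizer ({B.u (ConjClasses.map (φ : G →* G) C)} : Set G)),
            B.chi (ConjClasses.map (φ : G →* G) C) (e i) ⟨φ (h * x * h⁻¹), hx'⟩ =
              A.chi C i ⟨x, hx⟩)

noncomputable def sgnC (n : ℕ) : Equiv.Perm (Fin n) →* ℂˣ :=
  (Units.map (Int.castRingHom ℂ).toMonoidHom).comp Equiv.Perm.sign

lemma sgnC_swap {n : ℕ} {a b : Fin n} (h : a ≠ b) : sgnC n (Equiv.swap a b) = -1 := by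
  ext
  simp [sgnC, Equiv.Perm.sign_swap h]

lemma conj_hom {G M : Type*} [Group G] [CommGroup M] (χ : G →* M) (h x : G) :
    χ (h * x * h⁻¹) = χ x := by
  rw [map_mul, map_mul, map_inv, mul_comm (χ h) (χ x), mul_assoc, mul_inv_cancel, mul_one]

lemma char_classification {n : ℕ} (hn : 2 ≤ n) (χ : Equiv.Perm (Fin n) →* ℂˣ) :
    (∀ g, χ g = 1) ∨ (∀ g, χ g = sgnC n g) := by
  have hab : (⟨0, by omega⟩ : Fin n) ≠ ⟨1, by omega⟩ := by simp [Fin.ext_iff]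
  set τ : Equiv.Perm (Fin n) := Equiv.swap ⟨0, by omega⟩ ⟨1, by omega⟩ with hτ
  have h2 : (χ τ : ℂ) * (χ τ : ℂ) = 1 := by
    rw [← Units.val_mul, ← map_mul, Equiv.swap_mul_self, map_one, Units.val_one]
  have hswap : ∀ σ : Equiv.Perm (Fin n), σ.IsSwap → χ σ = χ τ := by
    rintro σ ⟨x, y, hxy, rfl⟩
    obtain ⟨c, hc⟩ := isConj_iff.mp (Equiv.Perm.isConj_swap hab hxy)
    rw [← hc, conj_hom]
  rcases mul_self_eq_one_iff.mp h2 with h1 | h1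
  · left
    intro g
    have hg : g ∈ Subgroup.closure { σ : Equiv.Perm (Fin n) | σ.IsSwap } := by
      rw [Equiv.Perm.closure_isSwap]; trivial
    induction hg using Subgroup.closure_induction with
    | mem σ hσ => exact Units.ext (by rw [hswap σ hσ]; exact h1)
    | one => exact map_one χ
    | mul a b _ _ ha hb => rw [map_mul, ha, hb, mul_one]
    | inv a _ ha => rw [map_inv, ha, inv_one]
  · right
    intro g
    have hg : g ∈ Subgroup.closure { σ : Equiv.Perm (Fin n) | σ.IsSwap } := by
      rw [Equiv.Perm.closure_isSwap]; trivial
    induction hg using Subgroup.closure_induction with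
    | mem σ hσ =>
      obtain ⟨x, y, hxy, rfl⟩ := hσ
      rw [sgnC_swap hxy, hswap _ ⟨x, y, hxy, rfl⟩]
      exact Units.ext (by rw [h1]; simp)
    | one => rw [map_one, map_one]
    | mul a b _ _ ha hb => rw [map_mul, map_mul, ha, hb]
    | inv a _ ha => rw [map_inv, map_inv, ha]

lemma char_classification' {n : ℕ} (hn : 2 ≤ n) (H : Subgroup (Equiv.Perm (Fin n)))
    (hH : ∀ x, x ∈ H) (χ : H →* ℂˣ) :
    (∀ x (hx : x ∈ H), χ ⟨x, hx⟩ = 1) ∨ (∀ x (hx : x ∈ H), χ ⟨x, hx⟩ = sgnC n x) := by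
  let ι : Equiv.Perm (Fin n) →* H :=
    { toFun := fun x => ⟨x, hH x⟩, map_one' := rfl, map_mul' := fun _ _ => rfl }
  rcases char_classification hn (χ.comp ι) with h | h
  · left; intro x hx; exact h x
  · right; intro x hx; exact h x

lemma mem_cent_one {G : Type*} [Group G] {g : G} (hg : g = 1) (x : G) :
    x ∈ Subgroup.centralizer ({g} : Set G) := by
  subst hg
  rw [Subgroup.mem_centralizer_iff]
  rintro y hy
  rw [Set.mem_singleton_iff] at hy
  subst hy; simp

lemma RSC.u_one {G : Type*} [Group G] (A : RSC G) : A.u (ConjClasses.mk 1) = 1 :=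
  isConj_one_left.mp (ConjClasses.mk_eq_mk_iff_isConj.mp (A.hu (ConjClasses.mk 1)))

lemma conjClasses_map_mk {G H : Type*} [Group G] [Group H] (f : G →* H) (a : G) :
    ConjClasses.map f (ConjClasses.mk a) = ConjClasses.mk (f a) := rfl

lemma conjClasses_map_one {G : Type*} [Group G] (f : G →* G) :
    ConjClasses.map f (ConjClasses.mk 1) = ConjClasses.mk 1 := by
  rw [conjClasses_map_mk, map_one]

lemma conjClasses_map_refl {G : Type*} [Group G] (C : ConjClasses G) :
    ConjClasses.map ((MulEquiv.refl G : G ≃* G) : G →* G) C = C := by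
  obtain ⟨a, rfl⟩ := ConjClasses.exists_rep C
  rw [conjClasses_map_mk]
  rfl

noncomputable def trivCount {G : Type*} [Group G] (A : RSC G) : ℕ :=
  Nat.card {i : Fin (A.r (ConjClasses.mk 1)) //
    ∀ x (hx : x ∈ Subgroup.centralizer ({A.u (ConjClasses.mk 1)} : Set G)),
      A.chi (ConjClasses.mk 1) i ⟨x, hx⟩ = 1}

lemma iso_trivCount {G : Type*} [Group G] (A B : RSC G) (hiso : A.Iso B)
    (hA : A.r (ConjClasses.mk 1) ≠ 0) : trivCount A = trivCount B := by
  obtain ⟨φ, hφ⟩ := hiso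
  obtain ⟨h, hu, hcond⟩ := hφ (ConjClasses.mk 1)
  rw [conjClasses_map_one] at hcond
  obtain ⟨e, he⟩ := hcond hA
  have hBu : B.u (ConjClasses.mk 1) = 1 := B.u_one
  have hAu : A.u (ConjClasses.mk 1) = 1 := A.u_one
  apply Nat.card_congr
  apply Equiv.subtypeEquiv e
  intro i
  constructor
  · intro hi y hy
    have hx : (h⁻¹ * φ.symm y * h) ∈
        Subgroup.centralizer ({A.u (ConjClasses.mk 1)} : Set G) := mem_cent_one hAu _
    have hval : φ (h * (h⁻¹ * φ.symm y * h) * h⁻¹) = y := by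
      have : h * (h⁻¹ * φ.symm y * h) * h⁻¹ = φ.symm y := by group
      rw [this, MulEquiv.apply_symm_apply]
    have hx' : φ (h * (h⁻¹ * φ.symm y * h) * h⁻¹) ∈
        Subgroup.centralizer ({B.u (ConjClasses.mk 1)} : Set G) := mem_cent_one hBu _
    have h2 := he i _ hx hx'
    rw [hi _ hx] at h2
    rw [← h2]
    congr 1
    exact Subtype.ext hval.symm
  · intro hi x hx
    have hx' : φ (h * x * h⁻¹) ∈
        Subgroup.centralizer ({B.u (ConjClasses.mk 1)} : Set G) := mem_cent_one hBu _
    rw [← he i x hx hx', hi _ hx']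


lemma nat_card_fin_subtype_le {a : ℕ} (p : Fin a → Prop) :
    Nat.card {i : Fin a // p i} ≤ a := by
  classical
  rw [Nat.card_eq_fintype_card]
  simpa using Fintype.card_subtype_le p

lemma nat_card_fin_lt {a m : ℕ} (hm : m ≤ a) :
    Nat.card {i : Fin a // (i : ℕ) < m} = m := by
  have e : {i : Fin a // (i : ℕ) < m} ≃ Fin m :=
    { toFun := fun x => ⟨x.1.1, x.2⟩
      invFun := fun j => ⟨⟨j.1, lt_of_lt_of_le j.2 hm⟩, j.2⟩
      left_inv := fun x => by ext; rfl
      right_inv := fun j => rfl }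
  rw [Nat.card_congr e, Nat.card_eq_fintype_card, Fintype.card_fin]

lemma equiv_of_counts {a b : ℕ} (p : Fin a → Prop) (q : Fin b → Prop)
    (hab : a = b) (hpq : Nat.card {i // p i} = Nat.card {j // q j}) :
    ∃ e : Fin a ≃ Fin b, ∀ i, q (e i) ↔ p i := by
  classical
  subst hab
  have h1 : Fintype.card {i // p i} = Fintype.card {j // q j} := by
    simpa [Nat.card_eq_fintype_card] using hpq
  have h2 : Fintype.card {i // ¬ p i} = Fintype.card {j // ¬ q j} := by
    rw [Fintype.card_subtype_compl, Fintype.card_subtype_compl, h1]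
  obtain ⟨e₁⟩ := Fintype.card_eq.mp h1
  obtain ⟨e₂⟩ := Fintype.card_eq.mp h2
  refine ⟨(Equiv.sumCompl p).symm.trans ((e₁.sumCongr e₂).trans (Equiv.sumCompl q)),
    fun i => ?_⟩
  by_cases hp : p i
  · rw [Equiv.trans_apply, Equiv.trans_apply, Equiv.sumCompl_symm_apply_of_pos hp,
      Equiv.sumCongr_apply, Sum.map_inl, Equiv.sumCompl_apply_inl]
    exact iff_of_true (e₁ ⟨i, hp⟩).2 hp
  · rw [Equiv.trans_apply, Equiv.trans_apply, Equiv.sumCompl_symm_apply_of_neg hp,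
      Equiv.sumCongr_apply, Sum.map_inr, Equiv.sumCompl_apply_inr]
    exact iff_of_false (e₂ ⟨i, hp⟩).2 hp


lemma count_iso {n : ℕ} (hn : 2 ≤ n) {k : ℕ} {r : ConjClasses (Equiv.Perm (Fin n)) → ℕ}
    (hr : ∀ C, r C = if C = ConjClasses.mk 1 then k else 0)
    (A B : RSC (Equiv.Perm (Fin n))) (hAr : A.r = r) (hBr : B.r = r)
    (hcount : trivCount A = trivCount B) : A.Iso B := by
  refine ⟨MulEquiv.refl _, fun C => ?_⟩
  have hmap := conjClasses_map_refl C
  have hconj : IsConj (A.u C) (B.u C) :=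
    ConjClasses.mk_eq_mk_iff_isConj.mp (by rw [A.hu, B.hu])
  obtain ⟨c, hc⟩ := isConj_iff.mp hconj
  refine ⟨c, ?_, ?_⟩
  · rw [hmap]; simpa using hc
  intro hrC
  have hC : C = ConjClasses.mk 1 := by
    by_contra hne
    rw [hAr, hr, if_neg hne] at hrC
    exact hrC rfl
  subst hC
  rw [conjClasses_map_refl]
  have hab : A.r (ConjClasses.mk 1) = B.r (ConjClasses.mk 1) := by rw [hAr, hBr]
  obtain ⟨e, he⟩ := equiv_of_counts
    (fun i => ∀ x (hx : x ∈ Subgroup.centralizer ({A.u (ConjClasses.mk 1)} : Set (Equiv.Perm (Fin n)))),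
      A.chi (ConjClasses.mk 1) i ⟨x, hx⟩ = 1)
    (fun j => ∀ x (hx : x ∈ Subgroup.centralizer ({B.u (ConjClasses.mk 1)} : Set (Equiv.Perm (Fin n)))),
      B.chi (ConjClasses.mk 1) j ⟨x, hx⟩ = 1)
    hab hcount
  refine ⟨e, fun i x hx hx' => ?_⟩
  by_cases hp : ∀ y (hy : y ∈ Subgroup.centralizer
      ({A.u (ConjClasses.mk 1)} : Set (Equiv.Perm (Fin n)))),
      A.chi (ConjClasses.mk 1) i ⟨y, hy⟩ = 1
  · rw [hp x hx, ((he i).mpr hp) _ hx']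
  · have hq : ¬ ∀ y (hy : y ∈ Subgroup.centralizer
        ({B.u (ConjClasses.mk 1)} : Set (Equiv.Perm (Fin n)))),
        B.chi (ConjClasses.mk 1) (e i) ⟨y, hy⟩ = 1 := fun h => hp ((he i).mp h)
    rcases char_classification' hn _ (fun z => mem_cent_one A.u_one z)
        (A.chi (ConjClasses.mk 1) i) with hA1 | hA2
    · exact absurd hA1 hp
    rcases char_classification' hn _ (fun z => mem_cent_one B.u_one z)
        (B.chi (ConjClasses.mk 1) (e i)) with hB1 | hB2
    · exact absurd hB1 hq
    rw [hA2 x hx, hB2 _ hx']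
    simp only [MulEquiv.refl_apply]
    exact conj_hom (sgnC n) c x

noncomputable def modelRSC (n m : ℕ) (r : ConjClasses (Equiv.Perm (Fin n)) → ℕ) :
    RSC (Equiv.Perm (Fin n)) where
  r := r
  u C := (ConjClasses.exists_rep C).choose
  hu C := (ConjClasses.exists_rep C).choose_spec
  chi C i := if (i : ℕ) < m then 1 else
    (sgnC n).comp (Subgroup.centralizer _).subtype

lemma exists_count {n : ℕ} (hn : 2 ≤ n) {k : ℕ} {r : ConjClasses (Equiv.Perm (Fin n)) → ℕ}
    (hr : ∀ C, r C = if C = ConjClasses.mk 1 then k else 0)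
    (m : ℕ) (hm : m ≤ k) :
    ∃ A : RSC (Equiv.Perm (Fin n)), A.r = r ∧ trivCount A = m := by
  classical
  refine ⟨modelRSC n m r, rfl, ?_⟩
  have hab : (⟨0, by omega⟩ : Fin n) ≠ ⟨1, by omega⟩ := by simp [Fin.ext_iff]
  set τ : Equiv.Perm (Fin n) := Equiv.swap ⟨0, by omega⟩ ⟨1, by omega⟩ with hτ
  have hpred : ∀ i : Fin ((modelRSC n m r).r (ConjClasses.mk 1)),
      (∀ x (hx : x ∈ Subgroup.centralizer
        ({(modelRSC n m r).u (ConjClasses.mk 1)} : Set (Equiv.Perm (Fin n)))),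
        (modelRSC n m r).chi (ConjClasses.mk 1) i ⟨x, hx⟩ = 1) ↔ (i : ℕ) < m := by
    intro i
    constructor
    · intro hi
      by_contra hlt
      have hmem := mem_cent_one (modelRSC n m r).u_one τ
      have := hi τ hmem
      rw [show (modelRSC n m r).chi (ConjClasses.mk 1) i = if (i : ℕ) < m then 1 else
        (sgnC n).comp (Subgroup.centralizer _).subtype from rfl, if_neg hlt] at this
      have hval : sgnC n τ = 1 := this
      rw [hτ, sgnC_swap hab] at hval
      have := congrArg Units.val hval
      norm_num at this
    · intro hi x hx
      rw [show (modelRSC n m r).chi (ConjClasses.mk 1) i = if (i : ℕ) < m then 1 else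
        (sgnC n).comp (Subgroup.centralizer _).subtype from rfl, if_pos hi]
      rfl
  have : trivCount (modelRSC n m r) =
      Nat.card {i : Fin ((modelRSC n m r).r (ConjClasses.mk 1)) // (i : ℕ) < m} :=
    Nat.card_congr (Equiv.subtypeEquivRight hpred)
  rw [this]
  exact nat_card_fin_lt (by rw [show (modelRSC n m r).r (ConjClasses.mk 1) = r (ConjClasses.mk 1) from rfl, hr, if_pos rfl] at *; exact hm)

/-- Let `G = S_n` with `n ≥ 2`, `n ≠ 6`, let `C₀ = {1}` be the conjugacy class of the
identity, and let `r` be the ramification with `r_{C₀} = k > 0` and `r_C = 0` for all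
other conjugacy classes `C`.  Then the number `N(G, r)` of isomorphism classes of
ramification systems with characters of `G` with ramification `r` equals `k + 1`. -/
theorem card_rsc_classes_identity_class (n k : ℕ) (hn : 2 ≤ n) (h6 : n ≠ 6)
    (hk : 0 < k)
    (r : ConjClasses (Equiv.Perm (Fin n)) → ℕ)
    (hr : ∀ C : ConjClasses (Equiv.Perm (Fin n)),
      r C = if C = ConjClasses.mk (1 : Equiv.Perm (Fin n)) then k else 0) :
    Nat.card
        (Quot fun A B : {A : RSC (Equiv.Perm (Fin n)) // A.r = r} =>
          RSC.Iso A.1 B.1) = k + 1 := by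
  classical
  have hk0 : r (ConjClasses.mk 1) = k := by rw [hr, if_pos rfl]
  have hbound : ∀ A : {A : RSC (Equiv.Perm (Fin n)) // A.r = r},
      trivCount A.1 < k + 1 := by
    intro A
    have h1 : trivCount A.1 ≤ A.1.r (ConjClasses.mk 1) := nat_card_fin_subtype_le _
    have h2 : A.1.r (ConjClasses.mk 1) = k := by rw [A.2, hk0]
    omega
  let R := fun A B : {A : RSC (Equiv.Perm (Fin n)) // A.r = r} => RSC.Iso A.1 B.1
  have hsound : ∀ A B, R A B →
      (⟨trivCount A.1, hbound A⟩ : Fin (k + 1)) = ⟨trivCount B.1, hbound B⟩ := by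
    intro A B hAB
    exact Fin.ext (iso_trivCount _ _ hAB (by rw [A.2, hk0]; omega))
  let f : Quot R → Fin (k + 1) := Quot.lift (fun A => ⟨trivCount A.1, hbound A⟩) hsound
  have hbij : Function.Bijective f := by
    constructor
    · intro q1 q2
      induction q1 using Quot.ind with | _ A =>
      induction q2 using Quot.ind with | _ B =>
      intro hfe
      have hcc : trivCount A.1 = trivCount B.1 := by
        have := congrArg Fin.val hfe
        simpa [f] using this
      exact Quot.sound (count_iso hn hr A.1 B.1 A.2 B.2 hcc)
    · rintro ⟨m, hmlt⟩
      obtain ⟨A, hA, hcA⟩ := exists_count hn hr m (by omega)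
      refine ⟨Quot.mk R ⟨A, hA⟩, Fin.ext ?_⟩
      simpa [f] using hcA
  have key : Nat.card (Quot R) = k + 1 := by
    rw [Nat.card_eq_of_bijective f hbij, Nat.card_eq_fintype_card, Fintype.card_fin]
  exact key
end
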